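/- (Minimizer of the population-level problem.) Under the stated conditions (feasibility and bounded costs for the constraint costs, and a nonnegative bounded objective cost): (i) the feasible set {λ_{1:m} ∈ Λ_1×…×Λ_m : g_j^*(λ_j; λ_{1:(j−1)}) ≤ β_j for all j ∈ [m]} is nonempty, since it contains (λ_1^max,…,λ_m^max); and (ii) if the recursively defined thresholds λ_1^* = U_1^*(β_1) and λ_j^* = U_j^*(λ_1^*,…,λ_{j−1}^*; β_j) (for j = 2,…,m) satisfy λ_j^* ∈ (λ_j^min, λ_j^max) for every j ∈ [m], then λ_{1:m}^* is feasible and minimizes the objective R(λ_{1:m}) = E[V_{m+1}^{(n+1)}·1{S_1^{(n+1)} ≤ λ_1, …, S_m^{(n+1)} ≤ λ_m}] over the feasible set. -/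
import Mathlib


open MeasureTheory Set Filter Topology

attribute [local instance] Classical.propDecidable

set_option linter.unusedSectionVars false
set_option linter.unusedVariables false
set_option maxHeartbeats 800000

noncomputable section

/-- The loss `L_j^{(i)}(λ_{1:j}) = V_j^{(i)} · 1{S_1^{(i)} ≤ λ_1, …, S_{j−1}^{(i)} ≤ λ_{j−1},
S_j^{(i)} > λ_j}`.  Only the coordinates `ℓ ≤ j` of the vector `lam` are read. -/
def lossFn {Ω : Type*} {m n : ℕ} (S V : Fin (n + 1) → Fin m → Ω → ℝ)
    (j : Fin m) (i : Fin (n + 1)) (lam : Fin m → ℝ) (ω : Ω) : ℝ :=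
  V i j ω * (if (∀ l, l < j → S i l ω ≤ lam l) ∧ lam j < S i j ω then 1 else 0)

/-- The population risk `g_j^*(λ_j; λ_{1:(j−1)}) = E[L_j^{(n+1)}(λ_{1:j})]`, the expectation being
taken at the test datapoint `i = n+1`. -/
def gStar {Ω : Type*} [MeasurableSpace Ω] {m n : ℕ} (μ : Measure Ω)
    (S V : Fin (n + 1) → Fin m → Ω → ℝ) (j : Fin m) (lam : Fin m → ℝ) : ℝ :=
  ∫ ω, lossFn S V j (Fin.last n) lam ω ∂μ

/-- `U_j^*(λ_{1:(j−1)}; b) = sup{x ∈ Λ_j : g_j^*(x; λ_{1:(j−1)}) > b}`, the supremum of the empty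
set being `λ_j^min` (implemented by inserting `λ_j^min` into the set, which does not change the
supremum of a nonempty subset of `Λ_j`). -/
def UStar {Ω : Type*} [MeasurableSpace Ω] {m n : ℕ} (μ : Measure Ω)
    (S V : Fin (n + 1) → Fin m → Ω → ℝ) (lamMin lamMax : Fin m → ℝ)
    (j : Fin m) (lam : Fin m → ℝ) (b : ℝ) : ℝ :=
  sSup (insert (lamMin j)
    {x | x ∈ Icc (lamMin j) (lamMax j) ∧ b < gStar μ S V j (Function.update lam j x)})

/-- The recursively defined population thresholds `λ_1^* = U_1^*(β_1)`,
`λ_j^* = U_j^*(λ_1^*,…,λ_{j−1}^*; β_j)`. -/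
def lamStar {Ω : Type*} [MeasurableSpace Ω] {m n : ℕ} (μ : Measure Ω)
    (S V : Fin (n + 1) → Fin m → Ω → ℝ) (lamMin lamMax β : Fin m → ℝ) (j : Fin m) : ℝ :=
  UStar μ S V lamMin lamMax j
    (fun ℓ => if hl : ℓ < j then lamStar μ S V lamMin lamMax β ℓ else 0) (β j)
termination_by j.val
decreasing_by exact hl

section Aux

variable {Ω : Type*} [MeasurableSpace Ω] {m n : ℕ} (μ : Measure Ω)
  (S V : Fin (n + 1) → Fin m → Ω → ℝ)

lemma lossFn_measurable (hS : ∀ i j, Measurable (S i j)) (hV : ∀ i j, Measurable (V i j))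
    (j : Fin m) (i : Fin (n + 1)) (lam : Fin m → ℝ) :
    Measurable (lossFn S V j i lam) := by
  apply (hV i j).mul
  have hset : MeasurableSet {ω | (∀ l, l < j → S i l ω ≤ lam l) ∧ lam j < S i j ω} := by
    have h1 : {ω | ∀ l, l < j → S i l ω ≤ lam l}
        = ⋂ l, ⋂ (_ : l < j), {ω | S i l ω ≤ lam l} := by
      ext ω; simp
    refine MeasurableSet.inter ?_ (measurableSet_lt measurable_const (hS i j))
    show MeasurableSet {ω | ∀ l, l < j → S i l ω ≤ lam l}
    rw [h1]
    exact MeasurableSet.iInter fun l => MeasurableSet.iInter fun _ =>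
      measurableSet_le (hS i l) measurable_const
  exact Measurable.ite hset measurable_const measurable_const

lemma lossFn_bound {Vmin Vmax : Fin m → ℝ} (hVmin0 : ∀ j, 0 ≤ Vmin j)
    (j : Fin m) (i : Fin (n + 1)) (lam : Fin m → ℝ) (ω : Ω)
    (hω : V i j ω ∈ Icc (Vmin j) (Vmax j)) :
    ‖lossFn S V j i lam ω‖ ≤ Vmax j := by
  have h0 : 0 ≤ V i j ω := le_trans (hVmin0 j) hω.1
  unfold lossFn
  split
  · rw [mul_one, Real.norm_eq_abs, abs_of_nonneg h0]; exact hω.2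
  · rw [mul_zero, norm_zero]; exact le_trans (le_trans (hVmin0 j) hω.1) hω.2

lemma lossFn_integrable (hS : ∀ i j, Measurable (S i j)) (hV : ∀ i j, Measurable (V i j))
    {Vmin Vmax : Fin m → ℝ} (hVmin0 : ∀ j, 0 ≤ Vmin j)
    (hVbd : ∀ i j, ∀ᵐ ω ∂μ, V i j ω ∈ Icc (Vmin j) (Vmax j))
    (j : Fin m) (i : Fin (n + 1)) (lam : Fin m → ℝ) [IsFiniteMeasure μ] :
    Integrable (lossFn S V j i lam) μ := by
  refine (integrable_const (Vmax j)).mono'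
    ((lossFn_measurable S V hS hV j i lam).aestronglyMeasurable) ?_
  filter_upwards [hVbd i j] with ω hω
  exact lossFn_bound S V hVmin0 j i lam ω hω

lemma lossFn_congr (j : Fin m) (i : Fin (n + 1)) {lam lam' : Fin m → ℝ}
    (h : ∀ l, l ≤ j → lam l = lam' l) (ω : Ω) :
    lossFn S V j i lam ω = lossFn S V j i lam' ω := by
  unfold lossFn
  have h1 : ((∀ l, l < j → S i l ω ≤ lam l) ∧ lam j < S i j ω)
      ↔ ((∀ l, l < j → S i l ω ≤ lam' l) ∧ lam' j < S i j ω) := by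
    rw [h j le_rfl]
    constructor <;> rintro ⟨ha, hb⟩ <;> refine ⟨fun l hl => ?_, hb⟩
    · rw [← h l hl.le]; exact ha l hl
    · rw [h l hl.le]; exact ha l hl
  by_cases hc : (∀ l, l < j → S i l ω ≤ lam l) ∧ lam j < S i j ω
  · rw [if_pos hc, if_pos (h1.mp hc)]
  · rw [if_neg hc, if_neg (fun hc' => hc (h1.mpr hc'))]

lemma gStar_congr (j : Fin m) {lam lam' : Fin m → ℝ}
    (h : ∀ l, l ≤ j → lam l = lam' l) :
    gStar μ S V j lam = gStar μ S V j lam' := by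
  unfold gStar
  congr 1
  funext ω
  exact lossFn_congr S V j (Fin.last n) h ω

lemma lossFn_mono (j : Fin m) (i : Fin (n + 1)) {lam lam' : Fin m → ℝ}
    (h1 : ∀ l, l < j → lam l ≤ lam' l) (h2 : lam' j ≤ lam j) (ω : Ω)
    (hV0 : 0 ≤ V i j ω) :
    lossFn S V j i lam ω ≤ lossFn S V j i lam' ω := by
  unfold lossFn
  by_cases hc : (∀ l, l < j → S i l ω ≤ lam l) ∧ lam j < S i j ω
  · have hc' : (∀ l, l < j → S i l ω ≤ lam' l) ∧ lam' j < S i j ω :=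
      ⟨fun l hl => le_trans (hc.1 l hl) (h1 l hl), lt_of_le_of_lt h2 hc.2⟩
    rw [if_pos hc, if_pos hc']
  · rw [if_neg hc]
    have : (0:ℝ) ≤ (if (∀ l, l < j → S i l ω ≤ lam' l) ∧ lam' j < S i j ω then (1:ℝ) else 0) := by
      split <;> norm_num
    rw [mul_zero]
    exact mul_nonneg hV0 this

lemma gStar_mono [IsFiniteMeasure μ] (hS : ∀ i j, Measurable (S i j))
    (hV : ∀ i j, Measurable (V i j))
    {Vmin Vmax : Fin m → ℝ} (hVmin0 : ∀ j, 0 ≤ Vmin j)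
    (hVbd : ∀ i j, ∀ᵐ ω ∂μ, V i j ω ∈ Icc (Vmin j) (Vmax j))
    (j : Fin m) {lam lam' : Fin m → ℝ}
    (h1 : ∀ l, l < j → lam l ≤ lam' l) (h2 : lam' j ≤ lam j) :
    gStar μ S V j lam ≤ gStar μ S V j lam' := by
  refine integral_mono_ae (lossFn_integrable μ S V hS hV hVmin0 hVbd j _ lam)
    (lossFn_integrable μ S V hS hV hVmin0 hVbd j _ lam') ?_
  filter_upwards [hVbd (Fin.last n) j] with ω hω
  exact lossFn_mono S V j (Fin.last n) h1 h2 ω (le_trans (hVmin0 j) hω.1)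

end Aux

section Key
variable {Ω : Type*} [MeasurableSpace Ω] {m n : ℕ} (μ : Measure Ω) [IsProbabilityMeasure μ]
  (S V : Fin (n + 1) → Fin m → Ω → ℝ)
  (hS : ∀ i j, Measurable (S i j)) (hV : ∀ i j, Measurable (V i j))
  (lamMin lamMax β : Fin m → ℝ) (hΛ : ∀ j, lamMin j ≤ lamMax j)
  {Vmin Vmax : Fin m → ℝ} (hVmin0 : ∀ j, 0 ≤ Vmin j)
  (hVbd : ∀ i j, ∀ᵐ ω ∂μ, V i j ω ∈ Icc (Vmin j) (Vmax j))


include hΛ in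
lemma ustar_bddAbove (j : Fin m) (lam : Fin m → ℝ) (b : ℝ) :
    BddAbove (insert (lamMin j)
      {x | x ∈ Icc (lamMin j) (lamMax j) ∧ b < gStar μ S V j (Function.update lam j x)}) := by
  refine ⟨lamMax j, ?_⟩
  rintro x (rfl | ⟨hx, -⟩)
  · exact hΛ j
  · exact hx.2

include hS hV hΛ hVmin0 hVbd in
lemma lamStar_le_of_feasible {lam : Fin m → ℝ}
    (hlam : ∀ j, lam j ∈ Icc (lamMin j) (lamMax j))
    (hg : ∀ j, gStar μ S V j lam ≤ β j) :
    ∀ j, lamStar μ S V lamMin lamMax β j ≤ lam j := by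
  suffices H : ∀ (N : ℕ) (j : Fin m), j.val < N → lamStar μ S V lamMin lamMax β j ≤ lam j by
    intro j; exact H (j.val + 1) j (Nat.lt_succ_self _)
  intro N
  induction N with
  | zero => intro j hj; omega
  | succ N IHN =>
    intro j hjN
    have IH : ∀ l : Fin m, l < j → lamStar μ S V lamMin lamMax β l ≤ lam l := by
      intro l hl
      exact IHN l (lt_of_lt_of_le (Fin.lt_iff_val_lt_val.mp hl) (Nat.lt_succ_iff.mp hjN))
    by_contra hcon
    push_neg at hcon
    rw [lamStar] at hcon
    unfold UStar at hcon
    obtain ⟨x, hx, hltx⟩ := exists_lt_of_lt_csSup ⟨lamMin j, mem_insert _ _⟩ hcon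
    rcases hx with rfl | ⟨hxIcc, hxg⟩
    · exact absurd (hlam j).1 (not_le.mpr hltx)
    · have hle : gStar μ S V j (Function.update
          (fun ℓ => if hl : ℓ < j then lamStar μ S V lamMin lamMax β ℓ else 0) j x) ≤
          gStar μ S V j lam := by
        refine gStar_mono μ S V hS hV hVmin0 hVbd j (fun l hl => ?_) ?_
        · rw [Function.update_of_ne (ne_of_lt hl), dif_pos hl]
          exact IH l hl
        · rw [Function.update_self]
          exact hltx.le
      have : β j < β j := lt_of_lt_of_le hxg (hle.trans (hg j))
      exact lt_irrefl _ this




include hS hV hΛ hVmin0 hVbd in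
lemma gStar_lamStar_le
    (hInt : ∀ j, lamStar μ S V lamMin lamMax β j ∈ Ioo (lamMin j) (lamMax j)) (j : Fin m) :
    gStar μ S V j (fun ℓ => lamStar μ S V lamMin lamMax β ℓ) ≤ β j := by
  set lamS : Fin m → ℝ := fun ℓ => lamStar μ S V lamMin lamMax β ℓ with hlamS
  have hcIoo : lamS j ∈ Ioo (lamMin j) (lamMax j) := hInt j
  have step1 : ∀ y : ℝ, lamS j < y → y ≤ lamMax j →
      gStar μ S V j (Function.update lamS j y) ≤ β j := by
    intro y hcy hymax
    by_contra hcon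
    push_neg at hcon
    have hmem : y ∈ {z | z ∈ Icc (lamMin j) (lamMax j) ∧ β j < gStar μ S V j
        (Function.update (fun ℓ => if hl : ℓ < j then lamStar μ S V lamMin lamMax β ℓ else 0)
          j z)} := by
      refine ⟨⟨le_trans hcIoo.1.le hcy.le, hymax⟩, ?_⟩
      have heq := gStar_congr μ S V j
        (lam := Function.update
          (fun ℓ => if hl : ℓ < j then lamStar μ S V lamMin lamMax β ℓ else 0) j y)
        (lam' := Function.update lamS j y) (fun l hl => by
          rcases eq_or_lt_of_le hl with rfl | hl'
          · simp
          · rw [Function.update_of_ne (ne_of_lt hl'), Function.update_of_ne (ne_of_lt hl'),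
              dif_pos hl'])
      rw [heq]
      exact hcon
    have hyle : y ≤ lamS j := by
      have hrw : lamS j = UStar μ S V lamMin lamMax j
          (fun ℓ => if hl : ℓ < j then lamStar μ S V lamMin lamMax β ℓ else 0) (β j) := by
        show lamStar μ S V lamMin lamMax β j = _
        rw [lamStar]
      rw [hrw]
      exact le_csSup (ustar_bddAbove μ S V lamMin lamMax hΛ j _ _) (mem_insert_of_mem _ hmem)
    exact absurd hyle (not_le.mpr hcy)
  have hcd : lamS j < lamMax j := hcIoo.2
  set x : ℕ → ℝ := fun k => lamS j + (lamMax j - lamS j) * (1 / (k + 1)) with hxdef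
  have hxgt : ∀ k, lamS j < x k := by
    intro k
    have : 0 < (lamMax j - lamS j) * (1 / (k + 1 : ℝ)) :=
      mul_pos (by linarith) (by positivity)
    simp only [hxdef]; linarith
  have hxle : ∀ k, x k ≤ lamMax j := by
    intro k
    have h1 : (1 : ℝ) / (k + 1) ≤ 1 := by
      rw [div_le_one (by positivity)]
      linarith [Nat.cast_nonneg (α := ℝ) k]
    have h2 : (lamMax j - lamS j) * (1 / (k + 1 : ℝ)) ≤ (lamMax j - lamS j) * 1 :=
      mul_le_mul_of_nonneg_left h1 (by linarith)
    simp only [hxdef]; linarith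
  have hxtend : Tendsto x atTop (𝓝 (lamS j)) := by
    have h0 : Tendsto (fun k : ℕ => (lamMax j - lamS j) * (1 / (k + 1 : ℝ))) atTop (𝓝 0) := by
      simpa using tendsto_one_div_add_atTop_nhds_zero_nat.const_mul (lamMax j - lamS j)
    rw [hxdef]
    simpa using tendsto_const_nhds.add h0
  have hdc : Tendsto (fun k => gStar μ S V j (Function.update lamS j (x k))) atTop
      (𝓝 (gStar μ S V j lamS)) := by
    unfold gStar
    refine tendsto_integral_of_dominated_convergence (fun _ => Vmax j)
      (fun k => (lossFn_measurable S V hS hV j _ _).aestronglyMeasurable)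
      (integrable_const _) (fun k => ?_) ?_
    · filter_upwards [hVbd (Fin.last n) j] with ω hω
      exact lossFn_bound S V hVmin0 j _ _ ω hω
    · refine Eventually.of_forall fun ω => ?_
      have hA : ∀ k, (∀ l, l < j → S (Fin.last n) l ω ≤ Function.update lamS j (x k) l)
          ↔ (∀ l, l < j → S (Fin.last n) l ω ≤ lamS l) := by
        intro k
        constructor <;> intro h l hl
        · have := h l hl; rwa [Function.update_of_ne (ne_of_lt hl)] at this
        · rw [Function.update_of_ne (ne_of_lt hl)]; exact h l hl
      have key : ∀ᶠ k in atTop,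
          lossFn S V j (Fin.last n) (Function.update lamS j (x k)) ω
            = lossFn S V j (Fin.last n) lamS ω := by
        by_cases hSc : lamS j < S (Fin.last n) j ω
        · filter_upwards [hxtend.eventually_lt_const hSc] with k hk
          unfold lossFn
          have h1 : ((∀ l, l < j → S (Fin.last n) l ω ≤ Function.update lamS j (x k) l) ∧
              Function.update lamS j (x k) j < S (Fin.last n) j ω) ↔
              ((∀ l, l < j → S (Fin.last n) l ω ≤ lamS l) ∧ lamS j < S (Fin.last n) j ω) := by
            rw [Function.update_self]
            constructor
            · rintro ⟨a, -⟩; exact ⟨(hA k).mp a, hSc⟩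
            · rintro ⟨a, -⟩; exact ⟨(hA k).mpr a, hk⟩
          by_cases h2 : (∀ l, l < j → S (Fin.last n) l ω ≤ lamS l) ∧ lamS j < S (Fin.last n) j ω
          · rw [if_pos (h1.mpr h2), if_pos h2]
          · rw [if_neg (fun hh => h2 (h1.mp hh)), if_neg h2]
        · refine Eventually.of_forall fun k => ?_
          unfold lossFn
          have hx2 : ¬ Function.update lamS j (x k) j < S (Fin.last n) j ω := by
            rw [Function.update_self]
            exact fun hh => hSc (lt_trans (hxgt k) hh)
          rw [if_neg (fun hh => hx2 hh.2), if_neg (fun hh => hSc hh.2)]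
      exact Tendsto.congr' (by filter_upwards [key] with k hk; exact hk.symm) tendsto_const_nhds
  exact le_of_tendsto hdc (Eventually.of_forall fun k => step1 (x k) (hxgt k) (hxle k))

end Key

/-- Lemma: minimizer of the population-level problem.  (i) The feasible set of
the population problem contains `(λ_1^max,…,λ_m^max)`, hence is nonempty; (ii) if the recursively
defined thresholds `λ_j^* = U_j^*(λ_{1:(j−1)}^*; β_j)` satisfy `λ_j^* ∈ (λ_j^min, λ_j^max)` for
every `j`, then `λ_{1:m}^*` is feasible and minimizes the objective
`R(λ) = E[V_{m+1}^{(n+1)}·1{S_1^{(n+1)} ≤ λ_1,…,S_m^{(n+1)} ≤ λ_m}]` over the feasible set. -/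
theorem population_minimizer
    {Ω : Type*} [MeasurableSpace Ω] (μ : Measure Ω) [IsProbabilityMeasure μ]
    (m n : ℕ) (hm : 1 ≤ m) (hn : 1 ≤ n)
    (S V : Fin (n + 1) → Fin m → Ω → ℝ) (Vobj : Ω → ℝ)
    (hSmeas : ∀ i j, Measurable (S i j)) (hVmeas : ∀ i j, Measurable (V i j))
    (hVobjmeas : Measurable Vobj)
    (VmaxObj : ℝ) (hVobj : ∀ᵐ ω ∂μ, Vobj ω ∈ Icc (0 : ℝ) VmaxObj)
    (lamMin lamMax : Fin m → ℝ) (hΛ : ∀ j, lamMin j ≤ lamMax j)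
    (β : Fin m → ℝ) (hβ : ∀ j, 0 ≤ β j)
    (Vmin Vmax : Fin m → ℝ) (hVmin0 : ∀ j, 0 ≤ Vmin j) (hVle : ∀ j, Vmin j ≤ Vmax j)
    (hVbd : ∀ i j, ∀ᵐ ω ∂μ, V i j ω ∈ Icc (Vmin j) (Vmax j))
    (hfeas : ∀ (j : Fin m) (i : Fin (n + 1)), ∀ᵐ ω ∂μ, lossFn S V j i lamMax ω ≤ β j) :
    -- (i) the point (λ_1^max, …, λ_m^max) is feasible
    ((∀ j : Fin m, lamMax j ∈ Icc (lamMin j) (lamMax j)) ∧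
      (∀ j : Fin m, gStar μ S V j lamMax ≤ β j)) ∧
    -- (ii) if λ_j^* ∈ (λ_j^min, λ_j^max) for all j, then λ^* is a feasible minimizer
    ((∀ j : Fin m,
        lamStar μ S V lamMin lamMax β j ∈ Ioo (lamMin j) (lamMax j)) →
      ((∀ j : Fin m,
          gStar μ S V j (fun ℓ => lamStar μ S V lamMin lamMax β ℓ) ≤ β j) ∧
        (∀ lam : Fin m → ℝ,
          (∀ j : Fin m, lam j ∈ Icc (lamMin j) (lamMax j)) →
          (∀ j : Fin m, gStar μ S V j lam ≤ β j) →
          (∫ ω, Vobj ω *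
              (if ∀ j : Fin m, S (Fin.last n) j ω ≤ lamStar μ S V lamMin lamMax β j
               then 1 else 0) ∂μ)
            ≤ ∫ ω, Vobj ω *
                (if ∀ j : Fin m, S (Fin.last n) j ω ≤ lam j then 1 else 0) ∂μ))) := by
  constructor
  · refine ⟨fun j => ⟨hΛ j, le_rfl⟩, fun j => ?_⟩
    have hInt := lossFn_integrable μ S V hSmeas hVmeas hVmin0 hVbd j (Fin.last n) lamMax
    calc gStar μ S V j lamMax
        ≤ ∫ _ω, β j ∂μ := integral_mono_ae hInt (integrable_const _) (hfeas j (Fin.last n))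
      _ = β j := by simp
  · intro hIoo
    refine ⟨fun j => gStar_lamStar_le μ S V hSmeas hVmeas lamMin lamMax β hΛ hVmin0 hVbd hIoo j,
      ?_⟩
    intro lam hlamIcc hlamg
    have hle : ∀ j, lamStar μ S V lamMin lamMax β j ≤ lam j :=
      lamStar_le_of_feasible μ S V hSmeas hVmeas lamMin lamMax β hΛ hVmin0 hVbd hlamIcc hlamg
    have hmeasSet : ∀ c : Fin m → ℝ,
        MeasurableSet {ω | ∀ j : Fin m, S (Fin.last n) j ω ≤ c j} := by
      intro c
      have h1 : {ω | ∀ j : Fin m, S (Fin.last n) j ω ≤ c j}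
          = ⋂ j, {ω | S (Fin.last n) j ω ≤ c j} := by ext ω; simp
      rw [h1]
      exact MeasurableSet.iInter fun j => measurableSet_le (hSmeas _ j) measurable_const
    have hintObj : ∀ c : Fin m → ℝ, Integrable
        (fun ω => Vobj ω * (if ∀ j : Fin m, S (Fin.last n) j ω ≤ c j then (1:ℝ) else 0)) μ := by
      intro c
      refine (integrable_const VmaxObj).mono'
        ((hVobjmeas.mul (Measurable.ite (hmeasSet c) measurable_const
          measurable_const)).aestronglyMeasurable) ?_
      filter_upwards [hVobj] with ω hω
      by_cases hc : ∀ j : Fin m, S (Fin.last n) j ω ≤ c j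
      · rw [if_pos hc, mul_one, Real.norm_eq_abs, abs_of_nonneg hω.1]; exact hω.2
      · rw [if_neg hc, mul_zero, norm_zero]; exact le_trans hω.1 hω.2
    refine integral_mono_ae (hintObj _) (hintObj _) ?_
    filter_upwards [hVobj] with ω hω
    by_cases hc : ∀ j : Fin m, S (Fin.last n) j ω ≤ lamStar μ S V lamMin lamMax β j
    · have hc' : ∀ j : Fin m, S (Fin.last n) j ω ≤ lam j :=
        fun j => le_trans (hc j) (hle j)
      rw [if_pos hc, if_pos hc']
    · rw [if_neg hc, mul_zero]
      have hnn : (0:ℝ) ≤ (if ∀ j : Fin m, S (Fin.last n) j ω ≤ lam j then (1:ℝ) else 0) := by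
        split <;> norm_num
      exact mul_nonneg hω.1 hnn


end
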